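/- Let V be a finite-dimensional real vector space and let T : [0,∞) → L(V) satisfy T(0) = id, T(x+y) = T(x)T(y) for all x,y ≥ 0, and suppose every T(x) is unipotent (T(x) − id is nilpotent). Let N(x) := log(T(x)) = Σ_{k≥1} (1/k)(id − T(x))^k (a finite sum, each N(x) nilpotent). Then the maps N(x) pairwise commute, N(x)N(y) = N(y)N(x), and they are additive: N(x) + N(y) = N(x+y) for all x,y ≥ 0. -/

import Mathlib

open Polynomial Finset

-- derivative of truncated log composed with r, when constant term manipulations done abstractly
lemma trunc_log_ext {R : Type*} [Ring R] [Module ℝ R] {a : R} {n m : ℕ}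
    (h : a ^ (n + 1) = 0) (hnm : n ≤ m) :
    ∑ k ∈ Icc 1 m, ((k : ℝ)⁻¹) • a ^ k = ∑ k ∈ Icc 1 n, ((k : ℝ)⁻¹) • a ^ k := by
  refine (Finset.sum_subset (Finset.Icc_subset_Icc_right hnm) ?_).symm
  intro k hk hk'
  simp only [mem_Icc] at hk hk'
  have hk2 : n + 1 ≤ k := by omega
  rw [pow_eq_zero_of_le hk2 h, smul_zero]

lemma deriv_trunc_log {R : Type*} [CommRing R] [Algebra ℝ R] (r : R[X]) (M : ℕ) :
    derivative (∑ k ∈ Icc 1 M, ((k : ℝ)⁻¹) • r ^ k) =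
      (∑ j ∈ range M, r ^ j) * derivative r := by
  rw [map_sum, Finset.sum_mul]
  rw [show Icc 1 M = Ico 1 (M+1) by rfl, Finset.sum_Ico_eq_sum_range]
  simp only [Nat.add_sub_cancel]
  refine Finset.sum_congr rfl fun j hj => ?_
  rw [derivative_smul, derivative_pow]
  have h1 : ((1 + j : ℕ) : ℝ) ≠ 0 := by positivity
  rw [show (1 + j) - 1 = j from by omega]
  rw [show (C ((1 + j : ℕ) : R) : R[X]) * r ^ j * derivative r
      = ((1 + j : ℕ) : R[X]) * (r ^ j * derivative r) from by rw [Polynomial.C_eq_natCast]; ring]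
  rw [← nsmul_eq_mul, ← Nat.cast_smul_eq_nsmul ℝ, smul_smul, inv_mul_cancel₀ h1, one_smul]

lemma eval_real_smul {R : Type*} [CommRing R] [Algebra ℝ R] (r : ℝ) (p : R[X]) (x : R) :
    (r • p).eval x = r • p.eval x := by
  rw [Algebra.smul_def, Algebra.smul_def, Polynomial.algebraMap_apply, eval_mul, eval_C]

lemma key_log_add {R : Type*} [CommRing R] [Algebra ℝ R] (s t : R) (n : ℕ)
    (hs : s ^ (n + 1) = 0) (ht : t ^ (n + 1) = 0) :
    (∑ k ∈ Icc 1 (2*n+1), ((k : ℝ)⁻¹) • s ^ k) + (∑ k ∈ Icc 1 (2*n+1), ((k : ℝ)⁻¹) • t ^ k)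
      = ∑ k ∈ Icc 1 (2*n+1), ((k : ℝ)⁻¹) • (s + t - s * t) ^ k := by
  set M := 2*n+1 with hM
  set p : R[X] := C s * X with hp
  set q : R[X] := C t * X with hq
  set w : R[X] := p + q - p * q with hw
  have hpn : p ^ (n+1) = 0 := by rw [hp, mul_pow, ← map_pow, hs, map_zero, zero_mul]
  have hqn : q ^ (n+1) = 0 := by rw [hq, mul_pow, ← map_pow, ht, map_zero, zero_mul]
  have hpM : p ^ M = 0 := pow_eq_zero_of_le (by omega) hpn
  have hqM : q ^ M = 0 := pow_eq_zero_of_le (by omega) hqn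
  have hwM : w ^ M = 0 := by
    have h2 : (q * (1 - p)) ^ (n+1) = 0 := by rw [mul_pow, hqn, zero_mul]
    have h3 := (Commute.all p (q * (1-p))).add_pow_eq_zero_of_add_le_succ_of_pow_eq_zero
      hpn h2 (k := M) (by omega)
    calc w ^ M = (p + q * (1 - p)) ^ M := by rw [hw]; ring_nf
    _ = 0 := h3
  have hfac : (1-p)*(1-q) = 1 - w := by rw [hw]; ring
  have geom : ∀ r : R[X], r ^ M = 0 → (∑ j ∈ range M, r ^ j) * (1 - r) = 1 := by
    intro r hr
    linear_combination - geom_sum_mul r M - hr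
  have hgp := geom p hpM
  have hgq := geom q hqM
  have hgw := geom w hwM
  set P : R[X] := (∑ k ∈ Icc 1 M, ((k:ℝ)⁻¹) • p ^ k) + (∑ k ∈ Icc 1 M, ((k:ℝ)⁻¹) • q ^ k)
      - (∑ k ∈ Icc 1 M, ((k:ℝ)⁻¹) • w ^ k) with hP
  have e1 : derivative p = C s := by rw [hp]; simp
  have e2 : derivative q = C t := by rw [hq]; simp
  have e3 : derivative w = C s + C t - (C s * q + p * C t) := by
    simp only [hw, derivative_sub, derivative_add, derivative_mul, e1, e2]
  have hdP : derivative P = 0 := by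
    have hexp : derivative P * ((1-p) * (1-q)) = 0 := by
      rw [hP, derivative_sub, derivative_add, deriv_trunc_log, deriv_trunc_log, deriv_trunc_log,
        e1, e2, e3]
      calc ((∑ j ∈ range M, p ^ j) * C s + (∑ j ∈ range M, q ^ j) * C t
            - (∑ j ∈ range M, w ^ j) * (C s + C t - (C s * q + p * C t))) * ((1-p)*(1-q))
          = C s * ((∑ j ∈ range M, p ^ j) * (1-p)) * (1-q)
            + C t * ((∑ j ∈ range M, q ^ j) * (1-q)) * (1-p)
            - (C s + C t - (C s * q + p * C t)) * ((∑ j ∈ range M, w ^ j) * ((1-p)*(1-q))) := by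
            ring
        _ = C s * 1 * (1-q) + C t * 1 * (1-p) - (C s + C t - (C s * q + p * C t)) * 1 := by
            rw [hfac, hgp, hgq, hgw]
        _ = 0 := by ring
    have hu : IsUnit ((1-p)*(1-q)) :=
      (IsNilpotent.isUnit_one_sub ⟨n+1, hpn⟩).mul (IsNilpotent.isUnit_one_sub ⟨n+1, hqn⟩)
    exact hu.mul_left_eq_zero.mp hexp
  have hcoeff0 : ∀ r : R[X], r.coeff 0 = 0 →
      (∑ k ∈ Icc 1 M, ((k:ℝ)⁻¹) • r ^ k).coeff 0 = 0 := by
    intro r hr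
    rw [finset_sum_coeff]
    refine Finset.sum_eq_zero fun k hk => ?_
    have hk1 : k ≠ 0 := by simp only [mem_Icc] at hk; omega
    rw [coeff_smul]
    have hpow : (r ^ k).coeff 0 = (r.coeff 0) ^ k := by
      rw [← constantCoeff_apply, map_pow, constantCoeff_apply]
    rw [hpow, hr, zero_pow hk1, smul_zero]
  have hPzero : P = 0 := by
    ext k
    rw [coeff_zero]
    rcases k with _ | k
    · have hcp : p.coeff 0 = 0 := by rw [hp]; simp
      have hcq : q.coeff 0 = 0 := by rw [hq]; simp
      have hcw : w.coeff 0 = 0 := by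
        simp [hw, hp, hq, mul_coeff_zero]
      rw [hP, coeff_sub, coeff_add, hcoeff0 p hcp, hcoeff0 q hcq, hcoeff0 w hcw]
      ring
    · have h1 := coeff_derivative P k
      rw [hdP, coeff_zero] at h1
      have hu : IsUnit ((k : R) + 1) := by
        have h2 : ((k : R) + 1) = algebraMap ℝ R ((k : ℝ) + 1) := by push_cast; simp
        rw [h2]
        exact (isUnit_iff_ne_zero.mpr (by positivity)).map (algebraMap ℝ R)
      exact hu.mul_left_eq_zero.mp h1.symm
  have hev := congrArg (eval 1) hPzero
  rw [hP] at hev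
  simp only [eval_sub, eval_add, eval_finset_sum, eval_real_smul, eval_pow, eval_zero] at hev
  have ep : p.eval 1 = s := by rw [hp]; simp
  have eq' : q.eval 1 = t := by rw [hq]; simp
  have ew : w.eval 1 = s + t - s * t := by rw [hw]; simp [ep, eq']
  rw [ep, eq', ew, sub_eq_zero] at hev
  exact hev

/-- For a semigroup of unipotent linear maps `T x` on a finite-dimensional
real vector space, the logarithms `N x = Σ_{k=1}^{dim V - 1} (1/k)(id - T x)^k` pairwise
commute and are additive in `x`. -/
theorem unipotent_log_additive
    {V : Type*} [AddCommGroup V] [Module ℝ V] [FiniteDimensional ℝ V]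
    (T : ℝ → Module.End ℝ V)
    (hT0 : T 0 = 1)
    (hTadd : ∀ x y : ℝ, 0 ≤ x → 0 ≤ y → T (x + y) = T x * T y)
    (hTuni : ∀ x : ℝ, 0 ≤ x → IsNilpotent (T x - 1))
    (N : ℝ → Module.End ℝ V)
    (hN : ∀ x : ℝ, 0 ≤ x →
      N x = ∑ k ∈ Finset.Icc 1 (Module.finrank ℝ V - 1), ((k : ℝ)⁻¹) • (1 - T x) ^ k) :
    (∀ x y : ℝ, 0 ≤ x → 0 ≤ y → N x * N y = N y * N x) ∧
    (∀ x y : ℝ, 0 ≤ x → 0 ≤ y → N x + N y = N (x + y)) := by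
  have hTc : ∀ x y : ℝ, 0 ≤ x → 0 ≤ y → Commute (T x) (T y) := by
    intro x y hx hy
    show T x * T y = T y * T x
    rw [← hTadd x y hx hy, ← hTadd y x hy hx, add_comm]
  have hc1 : ∀ x y : ℝ, 0 ≤ x → 0 ≤ y → Commute (1 - T x) (1 - T y) := by
    intro x y hx hy
    exact (Commute.one_left _).sub_left ((Commute.one_right _).sub_right (hTc x y hx hy))
  constructor
  · -- commutation
    intro x y hx hy
    rw [hN x hx, hN y hy]
    refine Commute.sum_left _ _ _ fun k hk => Commute.sum_right _ _ _ fun j hj => ?_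
    have h1 : Commute ((1 - T x) ^ k) ((1 - T y) ^ j) := (hc1 x y hx hy).pow_pow k j
    exact (h1.smul_left _).smul_right _
  · -- additivity
    intro x y hx hy
    rcases Nat.eq_zero_or_pos (Module.finrank ℝ V) with hd0 | hdpos
    · have : Subsingleton V := Module.finrank_zero_iff.mp hd0
      have : Subsingleton (Module.End ℝ V) := by infer_instance
      exact Subsingleton.elim _ _
    obtain ⟨n, hdim⟩ : ∃ n, Module.finrank ℝ V = n + 1 :=
      ⟨Module.finrank ℝ V - 1, by omega⟩
    have hpow : ∀ φ : Module.End ℝ V, IsNilpotent φ → φ ^ (n + 1) = 0 := by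
      intro φ h
      have h1 := h.charpoly_eq_X_pow_finrank
      have h2 := φ.aeval_self_charpoly
      rw [h1, hdim] at h2
      simpa using h2
    have hone : ∀ z : ℝ, 0 ≤ z → (1 - T z) ^ (n + 1) = 0 := by
      intro z hz
      refine hpow _ ?_
      rw [← neg_sub (T z) 1]
      exact (hTuni z hz).neg
    -- commutative subalgebra
    set S := Algebra.adjoin ℝ ({T x, T y} : Set (Module.End ℝ V)) with hS
    have hcomm : ∀ a ∈ ({T x, T y} : Set (Module.End ℝ V)),
        ∀ b ∈ ({T x, T y} : Set (Module.End ℝ V)), a * b = b * a := by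
      rintro a (rfl | rfl) b (rfl | rfl)
      · rfl
      · exact hTc x y hx hy
      · exact (hTc x y hx hy).symm
      · rfl
    letI : CommRing S :=
      { (inferInstance : Ring S), Algebra.adjoinCommSemiringOfComm ℝ hcomm with }
    set a : S := ⟨T x, Algebra.subset_adjoin (by simp)⟩ with ha
    set b : S := ⟨T y, Algebra.subset_adjoin (by simp)⟩ with hb
    have hcoe_s : ((1 - a : S) : Module.End ℝ V) = 1 - T x := by
      push_cast [ha]; ring
    have hcoe_t : ((1 - b : S) : Module.End ℝ V) = 1 - T y := by
      push_cast [hb]; ring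
    have hsn : (1 - a) ^ (n + 1) = 0 := by
      apply Subtype.ext
      push_cast [hcoe_s]
      exact hone x hx
    have htn : (1 - b) ^ (n + 1) = 0 := by
      apply Subtype.ext
      push_cast [hcoe_t]
      exact hone y hy
    have key := key_log_add (1 - a) (1 - b) n hsn htn
    have key2 := congrArg (Subalgebra.val S) key
    simp only [map_add, map_sum, map_smul, map_pow] at key2
    have hva : (Subalgebra.val S) (1 - a) = 1 - T x := hcoe_s
    have hvb : (Subalgebra.val S) (1 - b) = 1 - T y := hcoe_t
    have hvw : (Subalgebra.val S) ((1 - a) + (1 - b) - (1 - a) * (1 - b)) = 1 - T (x + y) := by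
      rw [map_sub, map_add, map_mul, hva, hvb, hTadd x y hx hy]
      noncomm_ring
    rw [hva, hvb, hvw] at key2
    have hxy : (0:ℝ) ≤ x + y := add_nonneg hx hy
    rw [trunc_log_ext (hone x hx) (by omega), trunc_log_ext (hone y hy) (by omega),
      trunc_log_ext (hone (x+y) hxy) (by omega)] at key2
    rw [hN x hx, hN y hy, hN (x+y) hxy, hdim, Nat.add_sub_cancel]
    exact key2
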